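/- Let Y = {−1, +1}, let f_1,...,f_n: X→{−1,+1} be base classifiers, let p ∈ R^n, and let N(p, I) be the n-dimensional Gaussian distribution with mean p and identity covariance. Then for any data distribution D over X×{−1,+1}: b_D^{N(p,I)}(h_p) ≥ Φ( ||p||₁ / √n ), where ||p||₁ = Σ_i |p_i| and Φ(k) = (1/2)(1 − erf(k/√2)). -/

import Mathlib

/-!
STATEMENT 17 (Weights maximizing lower bound -- binary Gaussian).
For base classifiers `f_i : X → {−1,+1}`, `p ∈ ℝ^n` and `N(p,I)` the Gaussian
with mean `p` and identity covariance, for any data distribution `D` over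
`X × {−1,+1}`:
`b_D^{N(p,I)}(h_p) ≥ Φ(‖p‖₁/√n)`, where `‖p‖₁ = ∑_i |p_i|` and
`Φ(k) = ½(1 − erf(k/√2))`.
-/

open MeasureTheory ProbabilityTheory
open scoped ENNReal

/-- Binary majority-vote loss `ℓ(h_w(x),y) = 1{y ≠ sign(w·f(x))}`. -/
noncomputable def signLoss {X : Type*} {n : ℕ} (f : Fin n → X → ℝ)
    (w : Fin n → ℝ) (x : X) (y : ℝ) : ℝ :=
  if y * ∑ i, w i * f i x ≤ 0 then 1 else 0

/-- The Gaussian `N(p, I)` on `ℝ^n`. -/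
noncomputable def gaussPi {n : ℕ} (p : Fin n → ℝ) : Measure (Fin n → ℝ) :=
  Measure.pi fun i => ProbabilityTheory.gaussianReal (p i) 1

/-- `erf(k) = (2/√π) ∫₀ᵏ e^{−t²} dt`. -/
noncomputable def erf (k : ℝ) : ℝ :=
  2 / Real.sqrt Real.pi * ∫ t in (0 : ℝ)..k, Real.exp (-t ^ 2)

/-- `Φ(k) = ½(1 − erf(k/√2))`. -/
noncomputable def Phi (k : ℝ) : ℝ :=
  (1 - erf (k / Real.sqrt 2)) / 2

open Real
open scoped NNReal

instance gaussPi_prob {n : ℕ} (p : Fin n → ℝ) : IsProbabilityMeasure (gaussPi p) := by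
  rw [gaussPi]; infer_instance

lemma measurable_finsum {n : ℕ} : Measurable (fun w : Fin n → ℝ => ∑ i, w i) :=
  Finset.univ.measurable_sum fun i _ => measurable_pi_apply i

lemma pdfReal_conv (a b : ℝ) (v : ℝ≥0) (hv : v ≠ 0) (y : ℝ) :
    ∫ x : ℝ, gaussianPDFReal a 1 x * gaussianPDFReal (b + x) v y
      = gaussianPDFReal (a + b) (1 + v) y := by
  have hV : (0:ℝ) < (v:ℝ) := by exact_mod_cast hv.bot_lt
  set V : ℝ := (v:ℝ) with hVdef
  have h1V : (0:ℝ) < 1 + V := by linarith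
  set α : ℝ := (1+V)/(2*V) with hα
  have hαpos : 0 < α := by positivity
  set γ : ℝ := a + (y - b - a)/(1+V) with hγ
  set K : ℝ := rexp (-(y - (a+b))^2 / (2*(1+V))) with hK
  set C : ℝ := (√(2*π*1))⁻¹ * (√(2*π*V))⁻¹ with hC
  have hpoint : ∀ x : ℝ, gaussianPDFReal a 1 x * gaussianPDFReal (b + x) v y
      = (C*K) * rexp (-(α * (x - γ)^2)) := by
    intro x
    simp only [gaussianPDFReal, NNReal.coe_one, ← hVdef]
    rw [mul_mul_mul_comm, ← Real.exp_add]
    have hE : -(x - a)^2/(2*1) + -(y - (b+x))^2/(2*V)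
        = -(y - (a+b))^2/(2*(1+V)) + -(α*(x-γ)^2) := by
      rw [hα, hγ]; field_simp; ring
    rw [hE, Real.exp_add, hC, hK]; ring
  have hconst : C * √(π/α) = (√(2*π*(1+V)))⁻¹ := by
    have h1 : (0:ℝ) < √(2*π*1) := Real.sqrt_pos.mpr (by positivity)
    have h2 : (0:ℝ) < √(2*π*V) := Real.sqrt_pos.mpr (by positivity)
    have h3 : (0:ℝ) < √(2*π*(1+V)) := Real.sqrt_pos.mpr (by positivity)
    have hsq : √(π/α) * √(2*π*(1+V)) = √(2*π*1) * √(2*π*V) := by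
      rw [← Real.sqrt_mul (by positivity), ← Real.sqrt_mul (by positivity)]
      congr 1
      rw [hα]; field_simp
    refine eq_inv_of_mul_eq_one_left ?_
    calc C * √(π/α) * √(2*π*(1+V)) = C * (√(π/α) * √(2*π*(1+V))) := by ring
      _ = C * (√(2*π*1) * √(2*π*V)) := by rw [hsq]
      _ = 1 := by rw [hC]; field_simp
  calc ∫ x : ℝ, gaussianPDFReal a 1 x * gaussianPDFReal (b + x) v y
      = ∫ x : ℝ, (C*K) * rexp (-(α * (x - γ)^2)) := by simp only [hpoint]
    _ = (C*K) * ∫ x : ℝ, rexp (-(α * (x - γ)^2)) := by rw [integral_const_mul]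
    _ = (C*K) * ∫ x : ℝ, rexp (-α * x^2) := by
        rw [← integral_sub_right_eq_self (fun u => rexp (-α * u^2)) γ]
        simp only [neg_mul]
    _ = (C*K) * √(π/α) := by rw [integral_gaussian]
    _ = gaussianPDFReal (a + b) (1 + v) y := by
        rw [gaussianPDFReal]
        push_cast
        rw [← hVdef, hK]
        rw [show C * K * √(π/α) = (C * √(π/α)) * K by ring, hconst]

lemma measurable_pdf_shift (b : ℝ) (v : ℝ≥0) :
    Measurable (fun q : ℝ × ℝ => gaussianPDF (b + q.1) v q.2) := by
  apply Measurable.ennreal_ofReal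
  unfold gaussianPDFReal
  fun_prop
lemma gauss_conv (a b : ℝ) (v : ℝ≥0) :
    ((gaussianReal a 1).prod (gaussianReal b v)).map (fun z => z.1 + z.2)
      = gaussianReal (a + b) (1 + v) := by
  ext s hs
  rw [Measure.map_apply (by fun_prop) hs, Measure.prod_apply (hs.preimage (by fun_prop))]
  have hstep : ∀ x : ℝ, gaussianReal b v (Prod.mk x ⁻¹' ((fun z : ℝ × ℝ => z.1 + z.2) ⁻¹' s))
      = gaussianReal (b + x) v s := by
    intro x
    have : (Prod.mk x ⁻¹' ((fun z : ℝ × ℝ => z.1 + z.2) ⁻¹' s)) = (fun y => x + y) ⁻¹' s := rfl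
    rw [this, ← Measure.map_apply (by fun_prop) hs, gaussianReal_map_const_add]
  simp only [hstep]
  rcases eq_or_ne v 0 with rfl | hv
  · simp only [gaussianReal_zero_var]
    have hind : ∀ x : ℝ, Measure.dirac (b + x) s = ((fun x : ℝ => b + x) ⁻¹' s).indicator 1 x := by
      intro x
      rw [Measure.dirac_apply' _ hs]
      rfl
    simp only [hind]
    rw [lintegral_indicator_one (hs.preimage (by fun_prop))]
    rw [← Measure.map_apply (by fun_prop) hs, gaussianReal_map_const_add]
    norm_num
  · have h1v : (1 + v : ℝ≥0) ≠ 0 := by positivity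
    have hjoint := measurable_pdf_shift b v
    have hmeas1 : Measurable fun x : ℝ => ∫⁻ y in s, gaussianPDF (b + x) v y ∂volume :=
      Measurable.lintegral_prod_right' (ν := volume.restrict s) hjoint
    calc ∫⁻ x, gaussianReal (b + x) v s ∂gaussianReal a 1
        = ∫⁻ x, (∫⁻ y in s, gaussianPDF (b + x) v y ∂volume) ∂gaussianReal a 1 := by
          simp only [gaussianReal_apply _ hv s]
      _ = ∫⁻ x, gaussianPDF a 1 x * ∫⁻ y in s, gaussianPDF (b + x) v y ∂volume ∂volume := by
          rw [gaussianReal_of_var_ne_zero a one_ne_zero,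
            lintegral_withDensity_eq_lintegral_mul _ (measurable_gaussianPDF a 1) hmeas1]
          rfl
      _ = ∫⁻ x, ∫⁻ y in s, gaussianPDF a 1 x * gaussianPDF (b + x) v y ∂volume ∂volume := by
          refine lintegral_congr fun x => ?_
          exact (lintegral_const_mul _ (hjoint.comp measurable_prodMk_left)).symm
      _ = ∫⁻ y in s, ∫⁻ x, gaussianPDF a 1 x * gaussianPDF (b + x) v y ∂volume ∂volume := by
          refine lintegral_lintegral_swap ?_
          exact (((measurable_gaussianPDF a 1).comp measurable_fst).mul
            (hjoint.comp (measurable_fst.prodMk measurable_snd))).aemeasurable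
      _ = ∫⁻ y in s, gaussianPDF (a + b) (1 + v) y ∂volume := by
          refine lintegral_congr fun y => ?_
          simp only [gaussianPDF]
          have hnn : ∀ x : ℝ, 0 ≤ gaussianPDFReal a 1 x * gaussianPDFReal (b + x) v y :=
            fun x => mul_nonneg (gaussianPDFReal_nonneg _ _ _) (gaussianPDFReal_nonneg _ _ _)
          have hmul : ∀ x : ℝ, ENNReal.ofReal (gaussianPDFReal a 1 x)
                * ENNReal.ofReal (gaussianPDFReal (b + x) v y)
              = ENNReal.ofReal (gaussianPDFReal a 1 x * gaussianPDFReal (b + x) v y) :=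
            fun x => (ENNReal.ofReal_mul (gaussianPDFReal_nonneg _ _ _)).symm
          simp only [hmul]
          have hVpos : (0:ℝ) < (v:ℝ) := by exact_mod_cast hv.bot_lt
          have hint : Integrable (fun x : ℝ => gaussianPDFReal a 1 x * gaussianPDFReal (b + x) v y) := by
            refine Integrable.mono' ((integrable_gaussianPDFReal a 1).const_mul (√(2*π*(v:ℝ)))⁻¹) ?_ ?_
            · apply Measurable.aestronglyMeasurable
              apply (measurable_gaussianPDFReal a 1).mul
              have := hjoint
              unfold gaussianPDFReal
              fun_prop
            · refine Filter.Eventually.of_forall fun x => ?_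
              rw [Real.norm_of_nonneg (hnn x)]
              rw [mul_comm ((√(2*π*(v:ℝ)))⁻¹) _]
              refine mul_le_mul_of_nonneg_left ?_ (gaussianPDFReal_nonneg _ _ _)
              unfold gaussianPDFReal
              calc (√(2*π*(v:ℝ)))⁻¹ * rexp (-(y - (b+x))^2/(2*(v:ℝ)))
                  ≤ (√(2*π*(v:ℝ)))⁻¹ * 1 := by
                    refine mul_le_mul_of_nonneg_left ?_ (by positivity)
                    rw [Real.exp_le_one_iff]
                    have : (0:ℝ) ≤ (y - (b+x))^2 := sq_nonneg _
                    have h2v : (0:ℝ) < 2*(v:ℝ) := by linarith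
                    rw [neg_div]
                    simp only [Left.neg_nonpos_iff]
                    positivity
                _ = (√(2*π*(v:ℝ)))⁻¹ := mul_one _
            -- done integrability
          rw [← ofReal_integral_eq_lintegral_ofReal hint
            (Filter.Eventually.of_forall hnn), pdfReal_conv a b v hv y]
      _ = gaussianReal (a + b) (1 + v) s := (gaussianReal_apply _ h1v s).symm

lemma map_sum_gaussPi : ∀ (n : ℕ) (q : Fin n → ℝ),
    (gaussPi q).map (fun w => ∑ i, w i) = gaussianReal (∑ i, q i) n := by
  intro n
  induction n with
  | zero =>
    intro q
    rw [gaussPi, Measure.pi_of_empty]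
    rw [Measure.map_dirac' measurable_finsum]
    simp [gaussianReal_zero_var]
  | succ n ih =>
    intro q
    have hMP := measurePreserving_piFinSuccAbove
      (fun i : Fin (n+1) => gaussianReal (q i) 1) 0
    set e := MeasurableEquiv.piFinSuccAbove (fun _ : Fin (n+1) => ℝ) 0 with he
    have hsum : (fun w : Fin (n+1) → ℝ => ∑ i, w i)
        = (fun z : ℝ × (Fin n → ℝ) => z.1 + ∑ j, z.2 j) ∘ e := by
      funext w
      simp only [Function.comp_apply, he, MeasurableEquiv.piFinSuccAbove,
        MeasurableEquiv.coe_mk, Fin.insertNthEquiv, Equiv.coe_fn_symm_mk]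
      rw [Fin.sum_univ_succ]
      congr 1
    rw [gaussPi, hsum, ← Measure.map_map (by fun_prop) (MeasurableEquiv.measurable e),
      hMP.map_eq]
    have htail : (Measure.pi fun j : Fin n => gaussianReal (q ((0:Fin (n+1)).succAbove j)) 1)
        = gaussPi (fun j => q j.succ) := by
      rw [gaussPi]
      congr 1
    rw [htail]
    have hdecomp : (fun z : ℝ × (Fin n → ℝ) => z.1 + ∑ j, z.2 j)
        = (fun z : ℝ × ℝ => z.1 + z.2) ∘ (Prod.map id (fun u : Fin n → ℝ => ∑ j, u j)) := rfl
    rw [hdecomp, ← Measure.map_map (by fun_prop) (measurable_id.prodMap measurable_finsum)]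
    rw [← Measure.map_prod_map _ _ measurable_id measurable_finsum,
      Measure.map_id, ih, gauss_conv]
    rw [← Fin.sum_univ_succ]
    congr 1
    · push_cast; ring
lemma map_sign_gaussPi {n : ℕ} (c p : Fin n → ℝ) (hc : ∀ i, c i = 1 ∨ c i = -1) :
    (gaussPi p).map (fun w i => c i * w i) = gaussPi (fun i => c i * p i) := by
  have hT : Measurable (fun (w : Fin n → ℝ) i => c i * w i) := by fun_prop
  simp only [gaussPi]
  refine (Measure.pi_eq fun s hs => ?_).symm
  rw [Measure.map_apply hT (MeasurableSet.univ_pi hs)]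
  have hpre : (fun (w : Fin n → ℝ) i => c i * w i) ⁻¹' Set.univ.pi s
      = Set.univ.pi (fun i => (c i * ·) ⁻¹' s i) := by
    ext w; simp [Set.mem_pi]
  rw [hpre, Measure.pi_pi]
  refine Finset.prod_congr rfl fun i _ => ?_
  rw [← Measure.map_apply (by fun_prop) (hs i), gaussianReal_map_const_mul]
  rcases hc i with h | h <;>
  · rw [h]
    congr 1
    ext
    norm_num [h]

lemma integrable_expnegsq : Integrable (fun u : ℝ => rexp (-u^2)) := by
  have := integrable_exp_neg_mul_sq (one_pos)
  simpa using this
lemma integral_Iic_expnegsq (k : ℝ) :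
    ∫ u in Set.Iic k, rexp (-u^2) = √π/2 + ∫ u in (0:ℝ)..k, rexp (-u^2) := by
  have h0 : ∫ u in Set.Iic (0:ℝ), rexp (-u^2) = √π/2 := by
    have hneg := integral_comp_neg_Ioi (c := (0:ℝ)) (f := fun u : ℝ => rexp (-u^2))
    simp only [neg_sq, neg_zero] at hneg
    rw [← hneg]
    have := integral_gaussian_Ioi 1
    simpa using this
  have hsub := intervalIntegral.integral_Iic_sub_Iic (f := fun u : ℝ => rexp (-u^2))
    (μ := volume) integrable_expnegsq.integrableOn integrable_expnegsq.integrableOn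
    (a := 0) (b := k)
  rw [h0] at hsub
  linarith [hsub]
lemma gauss_cdf (m : ℝ) (v : ℝ≥0) (hv : v ≠ 0) :
    gaussianReal m v (Set.Iic 0) = ENNReal.ofReal (Phi (m / √(v:ℝ))) := by
  have hV : (0:ℝ) < (v:ℝ) := by exact_mod_cast hv.bot_lt
  set V : ℝ := (v:ℝ) with hVdef
  set c : ℝ := √(2*V) with hcdef
  have hc : 0 < c := Real.sqrt_pos.mpr (by positivity)
  have hc2 : c^2 = 2*V := Real.sq_sqrt (by positivity)
  set T : ℝ ≃ₜ ℝ := (Homeomorph.mulLeft₀ c hc.ne').trans (Homeomorph.addRight m) with hTdef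
  have hTemb : MeasurableEmbedding (fun u : ℝ => c*u + m) := by
    have := T.toMeasurableEquiv.measurableEmbedding
    convert this using 1
    rfl
  have hmap : Measure.map (fun u : ℝ => c*u + m) volume = ENNReal.ofReal c⁻¹ • volume := by
    have hcomp : (fun u : ℝ => c*u + m) = (fun x : ℝ => x + m) ∘ (fun u : ℝ => c*u) := rfl
    rw [hcomp, ← Measure.map_map (measurable_add_const m) (measurable_const_mul c),
      Real.map_volume_mul_left hc.ne', Measure.map_smul, map_add_right_eq_self,
      abs_of_pos (inv_pos.mpr hc)]
  have hvol : (volume : Measure ℝ) = ENNReal.ofReal c • Measure.map (fun u : ℝ => c*u + m) volume := by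
    rw [hmap, smul_smul, ← ENNReal.ofReal_mul hc.le, mul_inv_cancel₀ hc.ne',
      ENNReal.ofReal_one, one_smul]
  have hpre : (fun u : ℝ => c*u + m) ⁻¹' (Set.Iic 0) = Set.Iic (-m/c) := by
    ext u
    simp only [Set.mem_preimage, Set.mem_Iic]
    rw [le_div_iff₀ hc]
    constructor <;> intro h <;> linarith
  have key : ∫ x in Set.Iic (0:ℝ), gaussianPDFReal m v x = Phi (m / √V) := by
    have h1 : ∫ x in Set.Iic (0:ℝ), gaussianPDFReal m v x
        = c * ∫ x in Set.Iic (0:ℝ), gaussianPDFReal m v x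
            ∂(Measure.map (fun u : ℝ => c*u + m) volume) := by
      conv_lhs => rw [hvol]
      rw [Measure.restrict_smul, integral_smul_measure, ENNReal.toReal_ofReal hc.le]
      rfl
    rw [h1, hTemb.setIntegral_map, hpre]
    have h2 : ∀ u : ℝ, gaussianPDFReal m v (c*u + m) = (√(2*π*V))⁻¹ * rexp (-u^2) := by
      intro u
      rw [gaussianPDFReal, ← hVdef]
      congr 1
      rw [show c*u + m - m = c*u by ring, mul_pow, hc2]
      field_simp
    simp only [h2]
    rw [integral_const_mul, integral_Iic_expnegsq]
    have hodd : ∫ u in (0:ℝ)..(-m/c), rexp (-u^2) = - ∫ u in (0:ℝ)..(m/c), rexp (-u^2) := by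
      have hsymm := intervalIntegral.integral_comp_neg (a := (0:ℝ)) (b := m/c)
        (fun u : ℝ => rexp (-u^2))
      simp only [neg_sq, neg_zero] at hsymm
      rw [neg_div, intervalIntegral.integral_symm (-(m/c)) 0, ← hsymm]
    rw [hodd]
    have harg : m/√V/√2 = m/c := by
      rw [hcdef, Real.sqrt_mul (by norm_num : (0:ℝ) ≤ 2) V, div_div, mul_comm]
    have hπ : (0:ℝ) < √π := Real.sqrt_pos.mpr Real.pi_pos
    have hconst : c * (√(2*π*V))⁻¹ = (√π)⁻¹ := by
      have h3 : √(2*π*V) = c * √π := by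
        rw [hcdef, ← Real.sqrt_mul (by positivity) π]
        congr 1
        ring
      rw [h3]
      field_simp
    unfold Phi erf
    rw [harg]
    set I := ∫ u in (0:ℝ)..(m/c), rexp (-u^2) with hI
    rw [show c * ((√(2*π*V))⁻¹ * (√π/2 + -I)) = (c * (√(2*π*V))⁻¹) * (√π/2 - I) by ring,
      hconst]
    field_simp
  rw [gaussianReal_apply_eq_integral m hv, key]

lemma Phi_anti {a b : ℝ} (hab : a ≤ b) : Phi b ≤ Phi a := by
  unfold Phi
  have h2 : (0:ℝ) < √2 := by positivity
  have hd : a/√2 ≤ b/√2 := by gcongr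
  have hint : ∀ x y : ℝ, IntervalIntegrable (fun t : ℝ => rexp (-t^2)) volume x y :=
    fun x y => Continuous.intervalIntegrable (by continuity) x y
  have hadd := intervalIntegral.integral_add_adjacent_intervals
    (hint 0 (a/√2)) (hint (a/√2) (b/√2))
  have hpos : 0 ≤ ∫ t in (a/√2)..(b/√2), rexp (-t^2) :=
    intervalIntegral.integral_nonneg hd (fun x _ => (Real.exp_pos _).le)
  have herf : erf (a/√2) ≤ erf (b/√2) := by
    unfold erf
    have hmul : (0:ℝ) ≤ 2/√π := by positivity
    have hle : ∫ t in (0:ℝ)..(a/√2), rexp (-t^2) ≤ ∫ t in (0:ℝ)..(b/√2), rexp (-t^2) := by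
      rw [← hadd]; linarith
    exact mul_le_mul_of_nonneg_left hle hmul
  linarith
theorem binary_gaussian_maximizing_lower_bound
    {X : Type*} [MeasurableSpace X]
    {n : ℕ} (hn : 0 < n) (f : Fin n → X → ℝ)
    (hf : ∀ i x, f i x = 1 ∨ f i x = -1)
    (hfm : ∀ i, Measurable (f i))
    (p : Fin n → ℝ)
    (D : Measure (X × ℝ)) [IsProbabilityMeasure D]
    (hD : ∀ᵐ z ∂D, z.2 = 1 ∨ z.2 = -1)
    (hpos0 : D {z | signLoss f p z.1 z.2 = 0} ≠ 0) :
    Phi ((∑ i, |p i|) / Real.sqrt n)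
      ≤ ∫ z, (∫ w, signLoss f w z.1 z.2 ∂(gaussPi p))
          ∂(D[|{z | signLoss f p z.1 z.2 = 0}]) := by
  classical
  have hjm : Measurable (fun q : (X × ℝ) × (Fin n → ℝ) => signLoss f q.2 q.1.1 q.1.2) := by
    unfold signLoss
    refine Measurable.ite ?_ measurable_const measurable_const
    refine measurableSet_le (Measurable.mul ?_ ?_) measurable_const
    · exact measurable_fst.snd
    · exact Finset.univ.measurable_sum fun i _ =>
        ((measurable_pi_apply i).comp measurable_snd).mul ((hfm i).comp measurable_fst.fst)
  haveI : IsProbabilityMeasure (D[|{z : X × ℝ | signLoss f p z.1 z.2 = 0}]) :=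
    cond_isProbabilityMeasure hpos0
  set L : ℝ := ∑ i, |p i| with hL
  set g : X × ℝ → ℝ := fun z => ∫ w, signLoss f w z.1 z.2 ∂(gaussPi p) with hg
  have hgsm : StronglyMeasurable g :=
    (hjm.stronglyMeasurable).integral_prod_right' (ν := gaussPi p)
  have hsqrtn : (0:ℝ) < √(n:ℝ) := Real.sqrt_pos.mpr (by exact_mod_cast hn)
  have key : ∀ x : X, ∀ y : ℝ, y = 1 ∨ y = -1 →
      (Phi (L / √(n:ℝ)) ≤ g (x,y) ∧ 0 ≤ g (x,y) ∧ g (x,y) ≤ 1) := by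
    intro x y hy
    set c : Fin n → ℝ := fun i => y * f i x with hcdef
    have hc : ∀ i, c i = 1 ∨ c i = -1 := by
      intro i
      rcases hy with hy | hy <;> rcases hf i x with h | h <;>
        simp [hcdef, hy, h]
    set S : Set (Fin n → ℝ) := {w | y * ∑ i, w i * f i x ≤ 0} with hSdef
    have hSmeas : MeasurableSet S := by
      refine measurableSet_le (Measurable.const_mul ?_ y) measurable_const
      exact Finset.univ.measurable_sum fun i _ => (measurable_pi_apply i).mul_const _
    have hind : ∀ w, signLoss f w x y = S.indicator (fun _ => (1:ℝ)) w := by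
      intro w
      simp only [signLoss, Set.indicator_apply, hSdef, Set.mem_setOf_eq]
    have hint : g (x,y) = (gaussPi p S).toReal := by
      rw [hg]
      simp only [hind]
      exact integral_indicator_one hSmeas
    have hsum_eq : ∀ w : Fin n → ℝ, ∑ i, c i * w i = y * ∑ i, w i * f i x := by
      intro w
      rw [Finset.mul_sum]
      exact Finset.sum_congr rfl fun i _ => by rw [hcdef]; ring
    have hmeasS : gaussPi p S = ENNReal.ofReal (Phi ((∑ i, c i * p i) / √(n:ℝ))) := by
      have hpre1 : S = (fun (w : Fin n → ℝ) i => c i * w i) ⁻¹'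
          ((fun u : Fin n → ℝ => ∑ i, u i) ⁻¹' (Set.Iic 0)) := by
        ext w
        simp only [hSdef, Set.mem_setOf_eq, Set.mem_preimage, Set.mem_Iic]
        rw [hsum_eq w]
      rw [hpre1, ← Measure.map_apply (by fun_prop)
        ((measurable_finsum) measurableSet_Iic),
        map_sign_gaussPi c p hc,
        ← Measure.map_apply measurable_finsum measurableSet_Iic,
        map_sum_gaussPi n (fun i => c i * p i),
        gauss_cdf _ (n : ℝ≥0) (by exact_mod_cast hn.ne')]
      norm_num
    have hle : (∑ i, c i * p i) ≤ L := by
      rw [hL]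
      refine Finset.sum_le_sum fun i _ => ?_
      rcases hc i with h | h <;> rw [h]
      · rw [one_mul]; exact le_abs_self _
      · rw [neg_one_mul]; exact neg_le_abs _
    have hdiv : (∑ i, c i * p i) / √(n:ℝ) ≤ L / √(n:ℝ) := by gcongr
    refine ⟨?_, ?_, ?_⟩
    · rw [hint, hmeasS]
      refine le_trans (Phi_anti hdiv) ?_
      rcases le_total (Phi ((∑ i, c i * p i) / √(n:ℝ))) 0 with h | h
      · exact h.trans ENNReal.toReal_nonneg
      · rw [ENNReal.toReal_ofReal h]
    · rw [hint]; exact ENNReal.toReal_nonneg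
    · rw [hint]
      calc (gaussPi p S).toReal ≤ (1 : ℝ≥0∞).toReal :=
            ENNReal.toReal_mono ENNReal.one_ne_top prob_le_one
        _ = 1 := ENNReal.toReal_one
  have hae : ∀ᵐ z ∂(D[|{z : X × ℝ | signLoss f p z.1 z.2 = 0}]), z.2 = 1 ∨ z.2 = -1 :=
    Filter.Eventually.filter_mono (cond_absolutelyContinuous.ae_le) hD
  have hgint : Integrable g (D[|{z : X × ℝ | signLoss f p z.1 z.2 = 0}]) := by
    refine Integrable.mono' (integrable_const (1:ℝ)) hgsm.aestronglyMeasurable ?_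
    filter_upwards [hae] with z hz
    obtain ⟨-, h0, h1⟩ := key z.1 z.2 hz
    rw [Real.norm_eq_abs, abs_le]
    constructor <;> simp at h0 h1 ⊢ <;> linarith
  have hfinal : ∫ _, Phi (L / √(n:ℝ)) ∂(D[|{z : X × ℝ | signLoss f p z.1 z.2 = 0}])
      ≤ ∫ z, g z ∂(D[|{z : X × ℝ | signLoss f p z.1 z.2 = 0}]) := by
    refine integral_mono_ae (integrable_const _) hgint ?_
    filter_upwards [hae] with z hz
    exact (key z.1 z.2 hz).1
  rw [integral_const, probReal_univ, one_smul] at hfinal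
  exact hfinal
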